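/- For each positive integer n, let P(n) denote the proportion, among all 2^(n choose 2) labeled simple graphs on the vertex set {1,…,n}, of those graphs Γ whose two-fold automorphism group Aut^TF(Γ) is nontrivial (contains an element other than (id,id)). Then P(n) tends to 0 as n tends to infinity. -/

import Mathlib

open SimpleGraph

section TFauxSection

open Finset

namespace TFaux

/-- Generic fiber-counting lemma: if every fiber of `f` on `s` has at least 2 elements,
then `6·#image ≤ 2·#s + #(elements in fibers of size ≤ 2)`. -/
lemma image_card_lemma {α β : Type*} [DecidableEq β] (s : Finset α) (f : α → β)
    (h2 : ∀ a ∈ s, 2 ≤ #(s.filter fun b => f b = f a)) :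
    6 * #(s.image f) ≤ 2 * #s +
      #(s.filter fun a => #(s.filter fun b => f b = f a) ≤ 2) := by
  classical
  set T := s.filter fun a => #(s.filter fun b => f b = f a) ≤ 2 with hT
  have hsc : #s = ∑ c ∈ s.image f, #(s.filter fun a => f a = c) :=
    card_eq_sum_card_fiberwise fun x hx => mem_image_of_mem f hx
  have hTc : #T = ∑ c ∈ s.image f, #(T.filter fun a => f a = c) :=
    card_eq_sum_card_fiberwise fun x hx => mem_image_of_mem f (mem_filter.mp hx).1
  have key : ∀ c ∈ s.image f,
      6 ≤ 2 * #(s.filter fun a => f a = c) + #(T.filter fun a => f a = c) := by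
    intro c hc
    obtain ⟨a, ha, rfl⟩ := mem_image.mp hc
    have h2a := h2 a ha
    by_cases h3 : 3 ≤ #(s.filter fun b => f b = f a)
    · omega
    · have hcard : #(s.filter fun b => f b = f a) = 2 := by omega
      have hTfib : (T.filter fun b => f b = f a) = s.filter fun b => f b = f a := by
        ext b
        simp only [hT, mem_filter, and_assoc, filter_filter]
        constructor
        · rintro ⟨hb, -, hfb⟩; exact ⟨hb, hfb⟩
        · rintro ⟨hb, hfb⟩
          refine ⟨hb, ?_, hfb⟩
          have : (s.filter fun x => f x = f b) = s.filter fun x => f x = f a := by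
            apply filter_congr; intro x hx; rw [hfb]
          rw [this, hcard]
      rw [hTfib, hcard]
  calc 6 * #(s.image f) = ∑ _c ∈ s.image f, 6 := by
        rw [sum_const, smul_eq_mul, mul_comm]
    _ ≤ ∑ c ∈ s.image f, (2 * #(s.filter fun a => f a = c) + #(T.filter fun a => f a = c)) :=
        sum_le_sum key
    _ = 2 * #s + #T := by rw [sum_add_distrib, hsc, hTc, mul_sum]


variable {n : ℕ} (π₁ π₂ : Equiv.Perm (Fin n))

/-- Generator relation on ordered pairs: apply (π₁,π₂) coordinatewise, or swap. -/
def rel (x y : Fin n × Fin n) : Prop :=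
  y = (π₁ x.1, π₂ x.2) ∨ y = (x.2, x.1)

def st : Setoid (Fin n × Fin n) := Relation.EqvGen.setoid (rel π₁ π₂)

abbrev Q := Quotient (st π₁ π₂)

noncomputable instance : Fintype (Q π₁ π₂) := by
  classical exact Quotient.fintype _

noncomputable instance : DecidableEq (Q π₁ π₂) := Classical.decEq _

def qmk (x : Fin n × Fin n) : Q π₁ π₂ := Quotient.mk (st π₁ π₂) x

lemma qmk_sound {x y : Fin n × Fin n} (h : rel π₁ π₂ x y) : qmk π₁ π₂ x = qmk π₁ π₂ y :=
  Quotient.sound (Relation.EqvGen.rel _ _ h)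

open Classical in
/-- classes not containing any diagonal element -/
noncomputable def good : Finset (Q π₁ π₂) :=
  univ.filter fun c => ∀ z : Fin n, qmk π₁ π₂ (z, z) ≠ c

open Classical in
noncomputable def sOK : Finset (Fin n × Fin n) :=
  univ.filter fun x => qmk π₁ π₂ x ∈ good π₁ π₂

def compat (G : SimpleGraph (Fin n)) : Prop :=
  ∀ v w : Fin n, G.Adj v w ↔ G.Adj (π₁ v) (π₂ w)

open Classical in
noncomputable def fB (G : SimpleGraph (Fin n)) : Fin n × Fin n → Bool :=
  fun x => decide (G.Adj x.1 x.2)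

lemma fB_const {G : SimpleGraph (Fin n)} (hG : compat π₁ π₂ G) {x y : Fin n × Fin n}
    (h : Relation.EqvGen (rel π₁ π₂) x y) : fB G x = fB G y := by
  classical
  induction h with
  | rel a b hab =>
      rcases hab with hab | hab
      · subst hab
        simp only [fB]
        exact decide_eq_decide.mpr (hG a.1 a.2)
      · subst hab
        simp only [fB]
        exact decide_eq_decide.mpr (adj_comm G a.1 a.2)
  | refl => rfl
  | symm a b _ ih => exact ih.symm
  | trans a b c _ _ ih1 ih2 => exact ih1.trans ih2

lemma adj_iff_of_qmk_eq {G : SimpleGraph (Fin n)} (hG : compat π₁ π₂ G)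
    {x y : Fin n × Fin n} (h : qmk π₁ π₂ x = qmk π₁ π₂ y) :
    (G.Adj x.1 x.2 ↔ G.Adj y.1 y.2) := by
  classical
  have := fB_const π₁ π₂ hG (Quotient.exact h)
  simpa only [fB, decide_eq_decide] using this

open Classical in
noncomputable def Phi (G : SimpleGraph (Fin n)) : ↥(good π₁ π₂) → Bool :=
  if hG : compat π₁ π₂ G then
    fun c => Quotient.lift (fB G) (fun _ _ hab => fB_const π₁ π₂ hG hab) c.1
  else fun _ => false

open Classical in
lemma Phi_spec {G : SimpleGraph (Fin n)} (hG : compat π₁ π₂ G) (c : ↥(good π₁ π₂)) :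
    Phi π₁ π₂ G c = Quotient.lift (fB G) (fun _ _ hab => fB_const π₁ π₂ hG hab) c.1 := by
  rw [Phi, dif_pos hG]

open Classical in
/-- The number of graphs compatible with `(π₁, π₂)` is at most `2 ^ #good`. -/
lemma count_compat_le :
    #(univ.filter fun G : SimpleGraph (Fin n) => compat π₁ π₂ G) ≤ 2 ^ #(good π₁ π₂) := by
  classical
  have hcard : Fintype.card (↥(good π₁ π₂) → Bool) = 2 ^ #(good π₁ π₂) := by
    rw [Fintype.card_fun, Fintype.card_bool, Fintype.card_coe]
  rw [← hcard, ← Finset.card_univ]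
  apply card_le_card_of_injOn (fun G => Phi π₁ π₂ G) (fun G _ => mem_univ _)
  intro G hGm G' hGm' heq
  have hG : compat π₁ π₂ G := (mem_filter.mp hGm).2
  have hG' : compat π₁ π₂ G' := (mem_filter.mp hGm').2
  have hadj : ∀ v w : Fin n, (G.Adj v w ↔ G'.Adj v w) := by
    intro v w
    by_cases hx : qmk π₁ π₂ (v, w) ∈ good π₁ π₂
    · have := congrFun heq ⟨qmk π₁ π₂ (v, w), hx⟩
      simp only at this
      rw [Phi_spec π₁ π₂ hG, Phi_spec π₁ π₂ hG'] at this
      have : fB G (v, w) = fB G' (v, w) := this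
      simpa only [fB, decide_eq_decide] using this
    · -- the class contains a diagonal point, so both adjacencies are false
      have hz : ∃ z : Fin n, qmk π₁ π₂ (z, z) = qmk π₁ π₂ (v, w) := by
        by_contra hcon
        push_neg at hcon
        exact hx (mem_filter.mpr ⟨mem_univ _, fun z => hcon z⟩)
      obtain ⟨z, hz⟩ := hz
      have h1 : G.Adj v w ↔ G.Adj z z := ((adj_iff_of_qmk_eq π₁ π₂ hG hz.symm) : G.Adj (v,w).1 (v,w).2 ↔ G.Adj (z,z).1 (z,z).2)
      have h2 : G'.Adj v w ↔ G'.Adj z z := ((adj_iff_of_qmk_eq π₁ π₂ hG' hz.symm) : G'.Adj (v,w).1 (v,w).2 ↔ G'.Adj (z,z).1 (z,z).2)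
      simp only [SimpleGraph.irrefl, iff_false] at h1 h2
      simp [h1, h2]
  ext v w
  exact hadj v w


lemma mem_sOK_ne {x : Fin n × Fin n} (hx : x ∈ sOK π₁ π₂) : x.1 ≠ x.2 := by
  classical
  intro hdiag
  have hgood : qmk π₁ π₂ x ∈ good π₁ π₂ := (mem_filter.mp hx).2
  have := (mem_filter.mp hgood).2 x.1
  apply this
  congr 1
  exact Prod.ext rfl hdiag

lemma swap_mem_sOK {x : Fin n × Fin n} (hx : x ∈ sOK π₁ π₂) :
    (x.2, x.1) ∈ sOK π₁ π₂ ∧ qmk π₁ π₂ (x.2, x.1) = qmk π₁ π₂ x := by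
  classical
  have hq : qmk π₁ π₂ x = qmk π₁ π₂ (x.2, x.1) := qmk_sound π₁ π₂ (Or.inr rfl)
  refine ⟨?_, hq.symm⟩
  refine mem_filter.mpr ⟨mem_univ _, ?_⟩
  rw [← hq]
  exact (mem_filter.mp hx).2

lemma good_eq_image : good π₁ π₂ = (sOK π₁ π₂).image (qmk π₁ π₂) := by
  classical
  ext c
  constructor
  · intro hc
    obtain ⟨x, hx⟩ := Quotient.exists_rep c
    refine mem_image.mpr ⟨x, ?_, hx⟩
    refine mem_filter.mpr ⟨mem_univ _, ?_⟩
    rw [show qmk π₁ π₂ x = c from hx]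
    exact hc
  · intro hc
    obtain ⟨x, hx, rfl⟩ := mem_image.mp hc
    exact (mem_filter.mp hx).2

open Classical in
/-- "doubly fixed" ordered off-diagonal pairs -/
noncomputable def DF : Finset (Fin n × Fin n) :=
  univ.filter fun a => a.1 ≠ a.2 ∧
    ((π₁ a.1, π₂ a.2) = a ∨ (π₁ a.1, π₂ a.2) = (a.2, a.1))

open Classical in
lemma fiber_two_le {a : Fin n × Fin n} (ha : a ∈ sOK π₁ π₂) :
    2 ≤ #((sOK π₁ π₂).filter fun b => qmk π₁ π₂ b = qmk π₁ π₂ a) := by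
  classical
  have hne := mem_sOK_ne π₁ π₂ ha
  obtain ⟨hswap, hq⟩ := swap_mem_sOK π₁ π₂ ha
  have hsub : ({a, (a.2, a.1)} : Finset (Fin n × Fin n)) ⊆
      (sOK π₁ π₂).filter fun b => qmk π₁ π₂ b = qmk π₁ π₂ a := by
    intro b hb
    rcases mem_insert.mp hb with rfl | hb
    · exact mem_filter.mpr ⟨ha, rfl⟩
    · rw [mem_singleton.mp hb]
      exact mem_filter.mpr ⟨hswap, hq⟩
  have hcard2 : #({a, (a.2, a.1)} : Finset (Fin n × Fin n)) = 2 := by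
    rw [card_insert_of_notMem, card_singleton]
    simp only [mem_singleton]
    intro hcon
    exact hne (congrArg Prod.fst hcon)
  calc 2 = #({a, (a.2, a.1)} : Finset (Fin n × Fin n)) := hcard2.symm
    _ ≤ _ := card_le_card hsub

open Classical in
lemma T_subset_DF :
    ((sOK π₁ π₂).filter fun a =>
      #((sOK π₁ π₂).filter fun b => qmk π₁ π₂ b = qmk π₁ π₂ a) ≤ 2) ⊆ DF π₁ π₂ := by
  classical
  intro a haT
  obtain ⟨ha, hle⟩ := mem_filter.mp haT
  have hne := mem_sOK_ne π₁ π₂ ha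
  obtain ⟨hswap, hq⟩ := swap_mem_sOK π₁ π₂ ha
  have hsub : ({a, (a.2, a.1)} : Finset (Fin n × Fin n)) ⊆
      (sOK π₁ π₂).filter fun b => qmk π₁ π₂ b = qmk π₁ π₂ a := by
    intro b hb
    rcases mem_insert.mp hb with rfl | hb
    · exact mem_filter.mpr ⟨ha, rfl⟩
    · rw [mem_singleton.mp hb]
      exact mem_filter.mpr ⟨hswap, hq⟩
  have hcard2 : #({a, (a.2, a.1)} : Finset (Fin n × Fin n)) = 2 := by
    rw [card_insert_of_notMem, card_singleton]
    simp only [mem_singleton]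
    intro hcon
    exact hne (congrArg Prod.fst hcon)
  have heqf : ({a, (a.2, a.1)} : Finset (Fin n × Fin n)) =
      (sOK π₁ π₂).filter fun b => qmk π₁ π₂ b = qmk π₁ π₂ a :=
    eq_of_subset_of_card_le hsub (by omega)
  -- the image y of a under the (π₁,π₂) generator lies in the fiber
  set y : Fin n × Fin n := (π₁ a.1, π₂ a.2) with hy
  have hqy : qmk π₁ π₂ a = qmk π₁ π₂ y := qmk_sound π₁ π₂ (Or.inl rfl)
  have hymem : y ∈ (sOK π₁ π₂).filter fun b => qmk π₁ π₂ b = qmk π₁ π₂ a := by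
    refine mem_filter.mpr ⟨?_, hqy.symm⟩
    refine mem_filter.mpr ⟨mem_univ _, ?_⟩
    rw [← hqy]
    exact (mem_filter.mp ha).2
  rw [← heqf] at hymem
  refine mem_filter.mpr ⟨mem_univ _, hne, ?_⟩
  rcases mem_insert.mp hymem with h | h
  · left; exact h
  · right; exact (mem_singleton.mp h).trans (by rfl)

open Classical in
lemma DF_card_le :
    #(DF π₁ π₂) ≤ (n - #π₁.support) * (n - #π₂.support) + #π₁.support := by
  classical
  have hsplit := card_filter_add_card_filter_not
    (s := DF π₁ π₂) (p := fun a => π₁ a.1 = a.1)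
  -- part with π₁ a.1 = a.1 : contained in fix₁ ×ˢ fix₂
  have h0 : ((DF π₁ π₂).filter fun a => π₁ a.1 = a.1) ⊆
      (π₁.supportᶜ ×ˢ π₂.supportᶜ) := by
    intro a ha
    obtain ⟨haDF, hfix⟩ := mem_filter.mp ha
    obtain ⟨-, hne, hor⟩ := mem_filter.mp haDF
    have hfix2 : π₂ a.2 = a.2 := by
      rcases hor with h | h
      · exact (Prod.mk.injEq _ _ _ _ ▸ h).2
      · exfalso
        have h1 : π₁ a.1 = a.2 := (Prod.mk.injEq _ _ _ _ ▸ h).1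
        exact hne (hfix ▸ h1 ▸ rfl)
    refine mem_product.mpr ⟨?_, ?_⟩
    · simpa using Equiv.Perm.notMem_support.mpr hfix
    · simpa using Equiv.Perm.notMem_support.mpr hfix2
  have h0c : #((DF π₁ π₂).filter fun a => π₁ a.1 = a.1) ≤
      (n - #π₁.support) * (n - #π₂.support) := by
    calc #((DF π₁ π₂).filter fun a => π₁ a.1 = a.1)
        ≤ #(π₁.supportᶜ ×ˢ π₂.supportᶜ) := card_le_card h0
      _ = (n - #π₁.support) * (n - #π₂.support) := by
          rw [card_product, card_compl, card_compl]
          simp [Fintype.card_fin]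
  have h1c : #((DF π₁ π₂).filter fun a => ¬π₁ a.1 = a.1) ≤ #π₁.support := by
    apply card_le_card_of_injOn (fun a => a.1)
    · intro a ha
      obtain ⟨-, hmov⟩ := mem_filter.mp ha
      exact Equiv.Perm.mem_support.mpr hmov
    · intro a ha a' ha' hfst
      obtain ⟨haDF, hmov⟩ := mem_filter.mp ha
      obtain ⟨ha'DF, hmov'⟩ := mem_filter.mp ha'
      obtain ⟨-, hne, hor⟩ := mem_filter.mp haDF
      obtain ⟨-, hne', hor'⟩ := mem_filter.mp ha'DF
      have hsnd : a.2 = π₁ a.1 := by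
        rcases hor with h | h
        · exact absurd (Prod.mk.injEq _ _ _ _ ▸ h).1 hmov
        · exact ((Prod.mk.injEq _ _ _ _ ▸ h).1).symm
      have hsnd' : a'.2 = π₁ a'.1 := by
        rcases hor' with h | h
        · exact absurd (Prod.mk.injEq _ _ _ _ ▸ h).1 hmov'
        · exact ((Prod.mk.injEq _ _ _ _ ▸ h).1).symm
      have hfst' : a.1 = a'.1 := hfst
      exact Prod.ext hfst' (by rw [hsnd, hsnd', hfst'])
  omega

open Classical in
lemma sOK_card_le : #(sOK π₁ π₂) ≤ n * n - n := by
  classical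
  have hsub : sOK π₁ π₂ ⊆ univ.filter (fun x : Fin n × Fin n => ¬x.1 = x.2) := by
    intro x hx
    exact mem_filter.mpr ⟨mem_univ _, mem_sOK_ne π₁ π₂ hx⟩
  have hdiag : (univ.filter fun x : Fin n × Fin n => x.1 = x.2) =
      univ.image (fun z : Fin n => (z, z)) := by
    ext x
    simp only [mem_filter, mem_univ, true_and, mem_image]
    constructor
    · intro h; exact ⟨x.1, Prod.ext rfl h⟩
    · rintro ⟨z, -, rfl⟩; rfl
  have hdc : #(univ.filter fun x : Fin n × Fin n => x.1 = x.2) = n := by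
    rw [hdiag, card_image_of_injective _ (fun a b h => (Prod.mk.injEq _ _ _ _ ▸ h).1),
      card_univ, Fintype.card_fin]
  have hsplit := card_filter_add_card_filter_not
    (s := (univ : Finset (Fin n × Fin n))) (p := fun x => x.1 = x.2)
  have huniv : #(univ : Finset (Fin n × Fin n)) = n * n := by
    rw [card_univ, Fintype.card_prod, Fintype.card_fin]
  have := card_le_card hsub
  omega

open Classical in
lemma good_card_bound :
    6 * #(good π₁ π₂) ≤ 2 * (n * n - n) +
      ((n - #π₁.support) * (n - #π₂.support) + #π₁.support) := by
  classical
  have himg := image_card_lemma (sOK π₁ π₂) (qmk π₁ π₂) (fun a ha => fiber_two_le π₁ π₂ ha)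
  rw [← good_eq_image] at himg
  have hT := card_le_card (T_subset_DF π₁ π₂)
  have hDF := DF_card_le π₁ π₂
  have hs := sOK_card_le π₁ π₂
  omega

lemma two_mul_choose_two (n : ℕ) : 2 * n.choose 2 = n * (n - 1) := by
  rw [Nat.choose_two_right]
  apply Nat.mul_div_cancel'
  rcases n with _ | m
  · simp
  · simpa [Nat.succ_sub_one, mul_comm] using (Nat.even_mul_succ_self m).two_dvd

lemma arith_aux (n a b g : ℕ) (hn : 5 ≤ n) (han : a ≤ n) (hbn : b ≤ n)
    (ha : a = 0 ∨ 2 ≤ a) (hb : b = 0 ∨ 2 ≤ b) (hab : ¬(a = 0 ∧ b = 0))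
    (hg : 6 * g ≤ 2 * (n * n - n) + ((n - a) * (n - b) + a)) :
    24 * g + (a + b) * (n - 4) ≤ 12 * (n * (n - 1)) := by
  have hnn : n ≤ n * n := Nat.le_mul_of_pos_left n (by omega)
  zify [han, hbn, hnn, (show 4 ≤ n by omega), (show 1 ≤ n by omega)] at hg ⊢
  have hza : (a:ℤ) ≤ n := by exact_mod_cast han
  have hzb : (b:ℤ) ≤ n := by exact_mod_cast hbn
  rcases ha with ha | ha
  · rcases hb with hb | hb
    · exact absurd ⟨ha, hb⟩ hab
    · have hzb2 : (2:ℤ) ≤ (b:ℤ) := by exact_mod_cast hb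
      subst ha
      push_cast at hg ⊢
      nlinarith [mul_le_mul_of_nonneg_right hzb2 (by linarith : (0:ℤ) ≤ (n:ℤ))]
  · have hza2 : (2:ℤ) ≤ (a:ℤ) := by exact_mod_cast ha
    rcases hb with hb | hb
    · subst hb
      push_cast at hg ⊢
      nlinarith [mul_le_mul_of_nonneg_right hza2 (by linarith : (0:ℤ) ≤ (n:ℤ))]
    · have hzb2 : (2:ℤ) ≤ (b:ℤ) := by exact_mod_cast hb
      nlinarith [mul_nonneg (by linarith : (0:ℤ) ≤ (a:ℤ) - 2) (by linarith : (0:ℤ) ≤ (n:ℤ) - b),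
        mul_nonneg (by linarith : (0:ℤ) ≤ (b:ℤ) - 2) (by linarith : (0:ℤ) ≤ (n:ℤ) - a)]

open Classical in
lemma good_card_final (hn : 5 ≤ n) (hp : ¬(π₁ = 1 ∧ π₂ = 1)) :
    24 * #(good π₁ π₂) + (#π₁.support + #π₂.support) * (n - 4) ≤ 24 * n.choose 2 := by
  classical
  have h2C := two_mul_choose_two n
  have hbound := good_card_bound π₁ π₂
  have han : #π₁.support ≤ n := by
    simpa [Fintype.card_fin] using card_le_univ π₁.support
  have hbn : #π₂.support ≤ n := by
    simpa [Fintype.card_fin] using card_le_univ π₂.support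
  have ha : #π₁.support = 0 ∨ 2 ≤ #π₁.support := by
    by_cases h : π₁ = 1
    · left; simp [h]
    · right; exact Equiv.Perm.one_lt_card_support_of_ne_one h
  have hb : #π₂.support = 0 ∨ 2 ≤ #π₂.support := by
    by_cases h : π₂ = 1
    · left; simp [h]
    · right; exact Equiv.Perm.one_lt_card_support_of_ne_one h
  have hab : ¬(#π₁.support = 0 ∧ #π₂.support = 0) := by
    rintro ⟨h1, h2⟩
    exact hp ⟨by rwa [← Equiv.Perm.card_support_eq_zero], by rwa [← Equiv.Perm.card_support_eq_zero]⟩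
  have := arith_aux n _ _ _ hn han hbn ha hb hab hbound
  omega

open Classical in
lemma perm_count (a : ℕ) (hn : 0 < n) :
    #(univ.filter fun π : Equiv.Perm (Fin n) => #π.support = a) ≤ n ^ (2 * a) := by
  classical
  have htarget : Fintype.card (Fin a → Fin n × Fin n) = n ^ (2 * a) := by
    rw [Fintype.card_fun, Fintype.card_prod, Fintype.card_fin, Fintype.card_fin]
    rw [two_mul, pow_add, mul_pow]
  rw [← htarget, ← Finset.card_univ]
  set z0 : Fin n := ⟨0, hn⟩
  apply card_le_card_of_injOn
    (fun π => fun i : Fin a =>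
      ((π.support.sort (· ≤ ·)).getD i z0, π ((π.support.sort (· ≤ ·)).getD i z0)))
  · intro _ _; exact mem_univ _
  intro π hπ π' hπ' heq
  have hlen : (π.support.sort (· ≤ ·)).length = a := by
    rw [Finset.length_sort]; exact (mem_filter.mp hπ).2
  have hlen' : (π'.support.sort (· ≤ ·)).length = a := by
    rw [Finset.length_sort]; exact (mem_filter.mp hπ').2
  have hfst : ∀ i : Fin a,
      (π.support.sort (· ≤ ·)).getD i z0 = (π'.support.sort (· ≤ ·)).getD i z0 :=
    fun i => congrArg Prod.fst (congrFun heq i)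
  have hsnd : ∀ i : Fin a,
      π ((π.support.sort (· ≤ ·)).getD i z0) = π' ((π'.support.sort (· ≤ ·)).getD i z0) :=
    fun i => congrArg Prod.snd (congrFun heq i)
  have hlist : π.support.sort (· ≤ ·) = π'.support.sort (· ≤ ·) := by
    apply List.ext_getElem (by rw [hlen, hlen'])
    intro i h1 h2
    have hia : i < a := by omega
    have e1 : (π.support.sort (· ≤ ·)).getD i z0 = (π.support.sort (· ≤ ·))[i] :=
      List.getD_eq_getElem _ _ h1
    have e2 : (π'.support.sort (· ≤ ·)).getD i z0 = (π'.support.sort (· ≤ ·))[i] :=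
      List.getD_eq_getElem _ _ h2
    have := hfst ⟨i, hia⟩
    simp only [Fin.val_mk] at this
    rw [e1, e2] at this
    exact this
  have hsupp : π.support = π'.support := by
    rw [← Finset.sort_toFinset (s := π.support) (r := (· ≤ ·)), ← Finset.sort_toFinset (s := π'.support) (r := (· ≤ ·)),
      hlist]
  apply Equiv.ext
  intro z
  by_cases hz : z ∈ π.support
  · have hzl : z ∈ π.support.sort (· ≤ ·) := (Finset.mem_sort _).mpr hz
    obtain ⟨i, hi, hiz⟩ := List.mem_iff_getElem.mp hzl
    have hia : i < a := by omega
    have e1 : (π.support.sort (· ≤ ·)).getD i z0 = z := by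
      rw [List.getD_eq_getElem _ _ hi]; exact hiz
    have := hsnd ⟨i, hia⟩
    simp only [Fin.val_mk] at this
    rw [e1] at this
    rw [this]
    congr 1
    rw [← hlist, e1]
  · have hz' : z ∉ π'.support := by rwa [← hsupp]
    rw [Equiv.Perm.notMem_support.mp hz, Equiv.Perm.notMem_support.mp hz']

open Classical in
lemma ratio_le {n : ℕ} (π₁ π₂ : Equiv.Perm (Fin n)) (hn : 5 ≤ n)
    (hp : ¬(π₁ = 1 ∧ π₂ = 1)) :
    (2:ℝ) ^ #(good π₁ π₂) / 2 ^ n.choose 2 ≤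
      ((2:ℝ) ^ (-(1/24:ℝ))) ^ ((#π₁.support + #π₂.support) * (n - 4)) := by
  classical
  have h24 := good_card_final π₁ π₂ hn hp
  set C := n.choose 2
  set g := #(good π₁ π₂)
  set K := (#π₁.support + #π₂.support) * (n - 4) with hK
  have hgC : g ≤ C := by omega
  have hKd : K ≤ 24 * (C - g) := by omega
  have hsplit : (2:ℝ) ^ C = 2 ^ g * 2 ^ (C - g) := by
    rw [← pow_add]; congr 1; omega
  have h2pos : (0:ℝ) < 2 ^ g := by positivity
  have hratio : (2:ℝ) ^ g / 2 ^ C = ((2:ℝ) ^ (C - g))⁻¹ := by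
    rw [hsplit]
    field_simp
  rw [hratio]
  have hL : ((2:ℝ) ^ (C - g))⁻¹ = (2:ℝ) ^ (-((C - g : ℕ) : ℝ)) := by
    rw [Real.rpow_neg (by norm_num), Real.rpow_natCast]
  have hR : ((2:ℝ) ^ (-(1/24:ℝ))) ^ K = (2:ℝ) ^ (-(1/24:ℝ) * K) := by
    rw [← Real.rpow_natCast ((2:ℝ) ^ (-(1/24:ℝ))) K, ← Real.rpow_mul (by norm_num)]
  rw [hL, hR]
  apply Real.rpow_le_rpow_of_exponent_le one_le_two
  have hcast : (K : ℝ) ≤ 24 * ((C - g : ℕ) : ℝ) := by exact_mod_cast hKd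
  linarith

open Classical in
lemma per_n_bound (n : ℕ) (hn : 5 ≤ n)
    (hx : (n:ℝ) ^ 2 * ((2:ℝ) ^ (-(1/24:ℝ))) ^ (n - 4) ≤ 1) :
    ((Nat.card {G : SimpleGraph (Fin n) //
        ∃ p : Equiv.Perm (Fin n) × Equiv.Perm (Fin n), p ≠ 1 ∧
          ∀ v w : Fin n, G.Adj v w ↔ G.Adj (p.1 v) (p.2 w)} : ℝ)) / 2 ^ n.choose 2 ≤
      ((n:ℝ) + 1) ^ 2 * ((n:ℝ) ^ 2 * ((2:ℝ) ^ (-(1/24:ℝ))) ^ (n - 4)) ^ 2 := by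
  classical
  set r : ℝ := (2:ℝ) ^ (-(1/24:ℝ)) with hrdef
  have hr0 : 0 < r := Real.rpow_pos_of_pos (by norm_num) _
  set x : ℝ := (n:ℝ) ^ 2 * r ^ (n - 4) with hxdef
  have hx0 : 0 ≤ x := by positivity
  set Pbad : Finset (Equiv.Perm (Fin n) × Equiv.Perm (Fin n)) :=
    univ.filter (fun p => p ≠ 1) with hPbad
  -- step 1 : express Nat.card as a Finset card
  have hScard : (Nat.card {G : SimpleGraph (Fin n) //
      ∃ p : Equiv.Perm (Fin n) × Equiv.Perm (Fin n), p ≠ 1 ∧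
        ∀ v w : Fin n, G.Adj v w ↔ G.Adj (p.1 v) (p.2 w)}) =
      #(univ.filter fun G : SimpleGraph (Fin n) =>
        ∃ p : Equiv.Perm (Fin n) × Equiv.Perm (Fin n), p ≠ 1 ∧ compat p.1 p.2 G) := by
    have hiff : ∀ G : SimpleGraph (Fin n),
        (∃ p : Equiv.Perm (Fin n) × Equiv.Perm (Fin n), p ≠ 1 ∧
          ∀ v w : Fin n, G.Adj v w ↔ G.Adj (p.1 v) (p.2 w)) ↔
        G ∈ univ.filter (fun G : SimpleGraph (Fin n) =>
          ∃ p : Equiv.Perm (Fin n) × Equiv.Perm (Fin n), p ≠ 1 ∧ compat p.1 p.2 G) := by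
      intro G
      simp [compat]
    rw [Nat.card_congr (Equiv.subtypeEquivRight hiff), Nat.card_eq_finsetCard]
  -- step 2 : union bound
  have hsub : (univ.filter fun G : SimpleGraph (Fin n) =>
      ∃ p : Equiv.Perm (Fin n) × Equiv.Perm (Fin n), p ≠ 1 ∧ compat p.1 p.2 G) ⊆
      Pbad.biUnion (fun p => univ.filter fun G => compat p.1 p.2 G) := by
    intro G hG
    obtain ⟨-, p, hp1, hp2⟩ := mem_filter.mp hG
    exact mem_biUnion.mpr ⟨p, mem_filter.mpr ⟨mem_univ _, hp1⟩,
      mem_filter.mpr ⟨mem_univ _, hp2⟩⟩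
  have hcount : #(univ.filter fun G : SimpleGraph (Fin n) =>
      ∃ p : Equiv.Perm (Fin n) × Equiv.Perm (Fin n), p ≠ 1 ∧ compat p.1 p.2 G) ≤
      ∑ p ∈ Pbad, 2 ^ #(good p.1 p.2) :=
    le_trans (le_trans (card_le_card hsub) card_biUnion_le)
      (sum_le_sum fun p _ => count_compat_le p.1 p.2)
  -- step 3 : to the reals
  have hmain : ((Nat.card {G : SimpleGraph (Fin n) //
      ∃ p : Equiv.Perm (Fin n) × Equiv.Perm (Fin n), p ≠ 1 ∧
        ∀ v w : Fin n, G.Adj v w ↔ G.Adj (p.1 v) (p.2 w)} : ℝ)) / 2 ^ n.choose 2 ≤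
      ∑ p ∈ Pbad, r ^ ((#p.1.support + #p.2.support) * (n - 4)) := by
    rw [hScard]
    have h1 : ((#(univ.filter fun G : SimpleGraph (Fin n) =>
        ∃ p : Equiv.Perm (Fin n) × Equiv.Perm (Fin n), p ≠ 1 ∧ compat p.1 p.2 G) : ℝ)) ≤
        ∑ p ∈ Pbad, (2:ℝ) ^ #(good p.1 p.2) := by
      calc ((#(univ.filter fun G : SimpleGraph (Fin n) =>
          ∃ p : Equiv.Perm (Fin n) × Equiv.Perm (Fin n), p ≠ 1 ∧ compat p.1 p.2 G) : ℝ))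
          ≤ ((∑ p ∈ Pbad, 2 ^ #(good p.1 p.2) : ℕ) : ℝ) := by exact_mod_cast hcount
        _ = ∑ p ∈ Pbad, (2:ℝ) ^ #(good p.1 p.2) := by push_cast; rfl
    calc ((#(univ.filter fun G : SimpleGraph (Fin n) =>
        ∃ p : Equiv.Perm (Fin n) × Equiv.Perm (Fin n), p ≠ 1 ∧ compat p.1 p.2 G) : ℝ)) /
          2 ^ n.choose 2
        ≤ (∑ p ∈ Pbad, (2:ℝ) ^ #(good p.1 p.2)) / 2 ^ n.choose 2 := by
          apply div_le_div_of_nonneg_right h1 (by positivity)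
      _ = ∑ p ∈ Pbad, (2:ℝ) ^ #(good p.1 p.2) / 2 ^ n.choose 2 := by rw [sum_div]
      _ ≤ ∑ p ∈ Pbad, r ^ ((#p.1.support + #p.2.support) * (n - 4)) := by
          apply sum_le_sum
          intro p hp
          have hpne : p ≠ 1 := (mem_filter.mp hp).2
          have hpne' : ¬(p.1 = 1 ∧ p.2 = 1) := by
            rintro ⟨h1', h2'⟩
            exact hpne (Prod.ext h1' h2')
          exact ratio_le p.1 p.2 hn hpne'
  refine le_trans hmain ?_
  -- step 4 : fiberwise sum over support sizes
  have hmaps : ∀ p ∈ Pbad, (#(p : Equiv.Perm (Fin n) × Equiv.Perm (Fin n)).1.support,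
      (#p.2.support)) ∈ (Finset.range (n+1)) ×ˢ (Finset.range (n+1)) := by
    intro p _
    refine mem_product.mpr ⟨mem_range.mpr ?_, mem_range.mpr ?_⟩
    · have := card_le_univ p.1.support
      simp only [card_univ, Fintype.card_fin] at this
      omega
    · have := card_le_univ p.2.support
      simp only [card_univ, Fintype.card_fin] at this
      omega
  rw [← sum_fiberwise_of_maps_to hmaps
    (fun p => r ^ ((#p.1.support + #p.2.support) * (n - 4)))]
  have hfiber : ∀ ab ∈ (Finset.range (n+1)) ×ˢ (Finset.range (n+1)),
      (∑ p ∈ Pbad.filter (fun p => (#p.1.support, #p.2.support) = ab),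
        r ^ ((#p.1.support + #p.2.support) * (n - 4))) ≤ x ^ 2 := by
    rintro ⟨a, b⟩ -
    have hcongr : ∀ p ∈ Pbad.filter (fun p => (#p.1.support, #p.2.support) = (a, b)),
        r ^ ((#p.1.support + #p.2.support) * (n - 4)) = r ^ ((a + b) * (n - 4)) := by
      intro p hp
      have h := (mem_filter.mp hp).2
      have ha : #p.1.support = a := congrArg Prod.fst h
      have hb : #p.2.support = b := congrArg Prod.snd h
      rw [ha, hb]
    rw [sum_congr rfl hcongr, sum_const, nsmul_eq_mul]
    by_cases hne : (Pbad.filter (fun p => (#p.1.support, #p.2.support) = (a, b))).Nonempty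
    · -- 2 ≤ a + b
      obtain ⟨p, hp⟩ := hne
      have hpPbad := (mem_filter.mp hp).1
      have hpne : p ≠ 1 := (mem_filter.mp hpPbad).2
      have hab := (mem_filter.mp hp).2
      have ha : #p.1.support = a := congrArg Prod.fst hab
      have hb : #p.2.support = b := congrArg Prod.snd hab
      have h2ab : 2 ≤ a + b := by
        by_cases h1 : p.1 = 1
        · have h2 : p.2 ≠ 1 := by
            intro h2'
            exact hpne (Prod.ext h1 h2')
          have := Equiv.Perm.one_lt_card_support_of_ne_one h2
          omega
        · have := Equiv.Perm.one_lt_card_support_of_ne_one h1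
          omega
      -- fiber cardinality bound
      have hfsub : Pbad.filter (fun p => (#p.1.support, #p.2.support) = (a, b)) ⊆
          (univ.filter fun π : Equiv.Perm (Fin n) => #π.support = a) ×ˢ
          (univ.filter fun π : Equiv.Perm (Fin n) => #π.support = b) := by
        intro q hq
        have h := (mem_filter.mp hq).2
        exact mem_product.mpr ⟨mem_filter.mpr ⟨mem_univ _, congrArg Prod.fst h⟩,
          mem_filter.mpr ⟨mem_univ _, congrArg Prod.snd h⟩⟩
      have hcard : #(Pbad.filter (fun p => (#p.1.support, #p.2.support) = (a, b))) ≤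
          n ^ (2 * a) * n ^ (2 * b) := by
        calc #(Pbad.filter (fun p => (#p.1.support, #p.2.support) = (a, b)))
            ≤ #((univ.filter fun π : Equiv.Perm (Fin n) => #π.support = a) ×ˢ
              (univ.filter fun π : Equiv.Perm (Fin n) => #π.support = b)) :=
              card_le_card hfsub
          _ = #(univ.filter fun π : Equiv.Perm (Fin n) => #π.support = a) *
              #(univ.filter fun π : Equiv.Perm (Fin n) => #π.support = b) := card_product _ _
          _ ≤ n ^ (2 * a) * n ^ (2 * b) :=
              Nat.mul_le_mul (perm_count a (by omega)) (perm_count b (by omega))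
      have hrpow : (0:ℝ) ≤ r ^ ((a + b) * (n - 4)) := by positivity
      calc (#(Pbad.filter (fun p => (#p.1.support, #p.2.support) = (a, b))) : ℝ) *
            r ^ ((a + b) * (n - 4))
          ≤ ((n:ℝ) ^ (2 * a) * (n:ℝ) ^ (2 * b)) * r ^ ((a + b) * (n - 4)) := by
            apply mul_le_mul_of_nonneg_right _ hrpow
            exact_mod_cast hcard
        _ = x ^ (a + b) := by
            rw [hxdef, mul_pow, ← pow_mul, ← pow_mul, ← pow_add,
              show 2*a+2*b = 2*(a+b) from by ring,
              show (a+b)*(n-4) = (n-4)*(a+b) from mul_comm _ _]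
        _ ≤ x ^ 2 := pow_le_pow_of_le_one hx0 hx h2ab
    · rw [not_nonempty_iff_eq_empty.mp hne]
      simp only [card_empty, Nat.cast_zero, zero_mul]
      positivity
  calc ∑ ab ∈ (Finset.range (n+1)) ×ˢ (Finset.range (n+1)),
        (∑ p ∈ Pbad.filter (fun p => (#p.1.support, #p.2.support) = ab),
          r ^ ((#p.1.support + #p.2.support) * (n - 4)))
      ≤ ∑ _ab ∈ (Finset.range (n+1)) ×ˢ (Finset.range (n+1)), x ^ 2 := sum_le_sum hfiber
    _ = ((n:ℝ) + 1) ^ 2 * x ^ 2 := by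
        rw [sum_const, card_product, card_range, nsmul_eq_mul]
        push_cast
        ring

lemma tendsto_aux (k j : ℕ) {r : ℝ} (h0 : 0 < r) (h1 : r < 1) :
    Filter.Tendsto (fun n : ℕ => (n:ℝ) ^ k * r ^ (n - j)) Filter.atTop (nhds 0) := by
  have base := tendsto_pow_const_mul_const_pow_of_lt_one k h0.le h1
  have base2 := base.const_mul ((r ^ j)⁻¹)
  rw [mul_zero] at base2
  apply Filter.Tendsto.congr' _ base2
  filter_upwards [Filter.eventually_ge_atTop j] with n hn
  rw [pow_sub₀ r (ne_of_gt h0) hn]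
  ring

end TFaux

end TFauxSection

/-- The proportion, among all 2^(n choose 2) labeled simple graphs on n vertices, of
graphs with a nontrivial two-fold automorphism (a pair (π₁,π₂) ≠ (id,id) with
(v,w) ∈ E ⟺ (π₁ v, π₂ w) ∈ E) tends to 0 as n → ∞. -/
theorem stmt_15 :
    Filter.Tendsto
      (fun n : ℕ =>
        (Nat.card {G : SimpleGraph (Fin n) //
            ∃ p : Equiv.Perm (Fin n) × Equiv.Perm (Fin n), p ≠ 1 ∧
              ∀ v w : Fin n, G.Adj v w ↔ G.Adj (p.1 v) (p.2 w)} : ℝ) /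
          (2 ^ n.choose 2 : ℝ))
      Filter.atTop (nhds 0) := by
  classical
  set r : ℝ := (2:ℝ) ^ (-(1/24:ℝ)) with hrdef
  have hr0 : 0 < r := Real.rpow_pos_of_pos (by norm_num) _
  have hr1 : r < 1 := Real.rpow_lt_one_of_one_lt_of_neg one_lt_two (by norm_num)
  set q : ℝ := r ^ 2 with hqdef
  have hq0 : 0 < q := by positivity
  have hq1 : q < 1 := pow_lt_one₀ hr0.le hr1 (by norm_num)
  -- eventual smallness of x n
  have hxt : Filter.Tendsto (fun n : ℕ => (n:ℝ) ^ 2 * r ^ (n - 4))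
      Filter.atTop (nhds 0) := TFaux.tendsto_aux 2 4 hr0 hr1
  have hev : ∀ᶠ n : ℕ in Filter.atTop, (n:ℝ) ^ 2 * r ^ (n - 4) ≤ 1 := by
    filter_upwards [hxt.eventually_lt_const (by norm_num : (0:ℝ) < 1)] with n hn
    exact hn.le
  -- the dominating sequence
  have hg : Filter.Tendsto (fun k : ℕ => (k:ℝ) ^ 6 * q ^ (k - 5))
      Filter.atTop (nhds 0) := TFaux.tendsto_aux 6 5 hq0 hq1
  have hgshift : Filter.Tendsto (fun n : ℕ => ((n+1:ℕ):ℝ) ^ 6 * q ^ ((n+1) - 5))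
      Filter.atTop (nhds 0) := hg.comp (Filter.tendsto_add_atTop_nat 1)
  apply squeeze_zero' (g := fun n : ℕ => ((n+1:ℕ):ℝ) ^ 6 * q ^ ((n+1) - 5))
  · filter_upwards with n
    positivity
  · filter_upwards [hev, Filter.eventually_ge_atTop 5] with n hxn hn5
    have hb := TFaux.per_n_bound n hn5 hxn
    refine hb.trans ?_
    -- ((n:ℝ)+1)^2 * ((n:ℝ)^2 * r^(n-4))^2 ≤ (n+1)^6 * q^(n+1-5)
    have hee : (n + 1) - 5 = n - 4 := by omega
    rw [hee]
    have hexp : ((n:ℝ) ^ 2 * r ^ (n - 4)) ^ 2 = (n:ℝ) ^ 4 * q ^ (n - 4) := by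
      rw [hqdef]; ring
    rw [hexp]
    have hcast : ((n+1:ℕ):ℝ) = (n:ℝ) + 1 := by push_cast; ring
    rw [hcast]
    have h1 : (n:ℝ) ^ 4 ≤ ((n:ℝ) + 1) ^ 4 := by
      apply pow_le_pow_left₀ (by positivity)
      linarith
    calc ((n:ℝ) + 1) ^ 2 * ((n:ℝ) ^ 4 * q ^ (n - 4))
        ≤ ((n:ℝ) + 1) ^ 2 * (((n:ℝ) + 1) ^ 4 * q ^ (n - 4)) := by
          apply mul_le_mul_of_nonneg_left _ (by positivity)
          apply mul_le_mul_of_nonneg_right h1 (by positivity)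
      _ = ((n:ℝ) + 1) ^ 6 * q ^ (n - 4) := by ring
  · exact hgshift
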